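/- For complex a1,b1,a2,b2 and nonnegative integers p1,p2, the top generalized Stirling number satisfies S_{a1,b1}^{a2,b2,p2}(p1, p1+p2) = a1^{p1} · a2^{p2}. -/

import Mathlib

open Finset

/-- Stirling numbers of the second kind. -/
def stirling2 : ℕ → ℕ → ℕ
  | 0, 0 => 1
  | 0, _ + 1 => 0
  | _ + 1, 0 => 0
  | p + 1, k + 1 => stirling2 p k + (k + 1) * stirling2 p (k + 1)

/-- Unsigned Stirling numbers of the first kind. -/
def stirling1 : ℕ → ℕ → ℕ
  | 0, 0 => 1
  | 0, _ + 1 => 0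
  | _ + 1, 0 => 0
  | p + 1, k + 1 => stirling1 p k + p * stirling1 p (k + 1)

/-- Stirling numbers of the second kind with integer second argument (0 when negative). -/
def stirling2Z (p : ℕ) (k : ℤ) : ℤ :=
  if k < 0 then 0 else stirling2 p k.toNat

/-- Generalized Stirling number of the second kind
`S_{a1,b1}^{a2,b2,p2}(p1,k)`. -/
noncomputable def gsn (a1 b1 a2 b2 : ℂ) (p1 p2 k : ℕ) : ℂ :=
  (1 / (k.factorial : ℂ)) * ∑ j ∈ range (k + 1),
    (-1) ^ j * (k.choose j : ℂ) * (a1 * ((k : ℂ) - j) + b1) ^ p1 *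
      (a2 * ((k : ℂ) - j) + b2) ^ p2

/-- Generalized Stirling number with integer index (0 when negative). -/
noncomputable def gsnZ (a1 b1 a2 b2 : ℂ) (p1 p2 : ℕ) (k : ℤ) : ℂ :=
  if k < 0 then 0 else gsn a1 b1 a2 b2 p1 p2 k.toNat


namespace Stmt3Aux
open Polynomial

lemma comp_coeff (f : Polynomial ℂ) (N n : ℕ) (hf : f.natDegree < N) :
    (f.comp (X + 1)).coeff n = ∑ i ∈ range N, f.coeff i * i.choose n := by
  conv_lhs => rw [f.as_sum_range' N hf]
  rw [Polynomial.sum_comp, finset_sum_coeff]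
  refine Finset.sum_congr rfl fun i _ => ?_
  rw [monomial_comp, coeff_C_mul, coeff_X_add_one_pow]

lemma pascal_step (k : ℕ) (F : ℕ → ℂ) :
    ∑ j ∈ range (k+2), (-1:ℂ)^j * ((k+1).choose j : ℂ) * F j
    = ∑ j ∈ range (k+1), (-1:ℂ)^j * (k.choose j : ℂ) * F j
      - ∑ j ∈ range (k+1), (-1:ℂ)^j * (k.choose j : ℂ) * F (j+1) := by
  have e1 : ∑ j ∈ range (k+2), (-1:ℂ)^j * ((k+1).choose j : ℂ) * F j
      = ∑ j ∈ range (k+1), ((-1:ℂ)^(j+1) * (k.choose j : ℂ) * F (j+1)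
          + (-1:ℂ)^(j+1) * (k.choose (j+1) : ℂ) * F (j+1)) + F 0 := by
    rw [Finset.sum_range_succ']
    simp only [Nat.choose_succ_succ]
    push_cast
    congr 1
    · exact Finset.sum_congr rfl fun j _ => by ring
    · simp
  have e2 : ∑ j ∈ range (k+2), (-1:ℂ)^j * (k.choose j : ℂ) * F j
      = ∑ j ∈ range (k+1), (-1:ℂ)^(j+1) * (k.choose (j+1) : ℂ) * F (j+1) + F 0 := by
    rw [Finset.sum_range_succ']
    simp
  have e3 : ∑ j ∈ range (k+2), (-1:ℂ)^j * (k.choose j : ℂ) * F j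
      = ∑ j ∈ range (k+1), (-1:ℂ)^j * (k.choose j : ℂ) * F j := by
    rw [Finset.sum_range_succ, Nat.choose_eq_zero_of_lt (by omega)]
    simp
  have e4 : ∑ j ∈ range (k+1), (-1:ℂ)^(j+1) * (k.choose j : ℂ) * F (j+1)
      = - ∑ j ∈ range (k+1), (-1:ℂ)^j * (k.choose j : ℂ) * F (j+1) := by
    rw [← Finset.sum_neg_distrib]
    exact Finset.sum_congr rfl fun j _ => by ring
  rw [e1, Finset.sum_add_distrib]
  linear_combination e4 + (e2.symm.trans e3)

lemma key (k : ℕ) : ∀ f : Polynomial ℂ, f.natDegree ≤ k →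
    ∑ j ∈ range (k + 1), (-1 : ℂ) ^ j * (k.choose j : ℂ) * f.eval ((k : ℂ) - j)
      = (k.factorial : ℂ) * f.coeff k := by
  induction k with
  | zero =>
    intro f hf
    rw [Polynomial.eq_C_of_natDegree_le_zero hf]
    simp
  | succ k ih =>
    intro f hf
    set g : Polynomial ℂ := f.comp (X + 1) - f with hg
    have hgc : ∀ n, g.coeff n = (∑ i ∈ range (k + 2), f.coeff i * i.choose n) - f.coeff n := by
      intro n
      rw [hg, coeff_sub, comp_coeff f (k + 2) n (by omega)]
    have hgdeg : g.natDegree ≤ k := by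
      rw [natDegree_le_iff_coeff_eq_zero]
      intro N hN
      rw [hgc]
      rcases lt_or_ge N (k + 2) with h | h
      · rw [Finset.sum_eq_single N]
        · simp
        · intro i hi hne
          rw [Nat.choose_eq_zero_of_lt (by simp at hi; omega)]
          simp
        · intro h'; exact absurd (Finset.mem_range.2 h) h'
      · rw [Finset.sum_eq_zero, coeff_eq_zero_of_natDegree_lt (by omega)]
        · ring
        · intro i hi
          rw [Nat.choose_eq_zero_of_lt (by simp at hi; omega)]
          simp
    have hgcoeff : g.coeff k = (k + 1 : ℂ) * f.coeff (k + 1) := by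
      rw [hgc, Finset.sum_range_succ, Finset.sum_range_succ, Finset.sum_eq_zero]
      · rw [Nat.choose_self, Nat.choose_succ_self_right]
        push_cast
        ring
      · intro i hi
        rw [Nat.choose_eq_zero_of_lt (by simp at hi; omega)]
        simp
    have step : ∑ j ∈ range (k + 1 + 1), (-1 : ℂ) ^ j * (((k+1).choose j : ℕ) : ℂ) * f.eval (((k+1 : ℕ) : ℂ) - j)
        = ∑ j ∈ range (k + 1), (-1 : ℂ) ^ j * (k.choose j : ℂ) * g.eval ((k : ℂ) - j) := by
      have := pascal_step k (fun j => f.eval (((k+1 : ℕ) : ℂ) - j))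
      rw [this, ← Finset.sum_sub_distrib]
      refine Finset.sum_congr rfl fun j _ => ?_
      have h1 : g.eval ((k : ℂ) - j) = f.eval ((k : ℂ) - j + 1) - f.eval ((k : ℂ) - j) := by
        simp [hg]
      have h2 : (((k+1 : ℕ) : ℂ) - j) = (k : ℂ) - j + 1 := by push_cast; ring
      have h3 : (((k+1 : ℕ) : ℂ) - ((j+1 : ℕ) : ℂ)) = (k : ℂ) - j := by push_cast; ring
      rw [h1, h2, h3]
      ring
    rw [step, ih g hgdeg, hgcoeff, Nat.factorial_succ]
    push_cast
    ring

end Stmt3Aux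

theorem stmt3 (a1 b1 a2 b2 : ℂ) (p1 p2 : ℕ) :
    gsn a1 b1 a2 b2 p1 p2 (p1 + p2) = a1 ^ p1 * a2 ^ p2 := by
  classical
  set k := p1 + p2 with hk
  set f : Polynomial ℂ := (Polynomial.C a1 * Polynomial.X + Polynomial.C b1) ^ p1 *
      (Polynomial.C a2 * Polynomial.X + Polynomial.C b2) ^ p2 with hf
  have hd1 : ((Polynomial.C a1 * Polynomial.X + Polynomial.C b1) ^ p1).natDegree ≤ p1 := by
    compute_degree
  have hd2 : ((Polynomial.C a2 * Polynomial.X + Polynomial.C b2) ^ p2).natDegree ≤ p2 := by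
    compute_degree
  have hfd : f.natDegree ≤ k := by
    rw [hf, hk]
    exact Polynomial.natDegree_mul_le.trans (add_le_add hd1 hd2)
  have hcoeff : f.coeff k = a1 ^ p1 * a2 ^ p2 := by
    rw [hf, hk, Polynomial.coeff_mul_add_eq_of_natDegree_le hd1 hd2]
    have ha : ∀ a b : ℂ, ∀ p : ℕ,
        ((Polynomial.C a * Polynomial.X + Polynomial.C b) ^ p).coeff p = a ^ p := by
      intro a b p
      have h1 : (Polynomial.C a * Polynomial.X + Polynomial.C b).natDegree ≤ 1 := by
        compute_degree
      have := Polynomial.coeff_pow_of_natDegree_le (m := p) h1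
      rw [mul_one] at this
      rw [this]
      simp
    rw [ha, ha]
  have heval : ∀ j : ℕ, f.eval ((k : ℂ) - j)
      = (a1 * ((k : ℂ) - j) + b1) ^ p1 * (a2 * ((k : ℂ) - j) + b2) ^ p2 := by
    intro j
    simp [hf]
  have hsum : ∑ j ∈ range (k + 1),
      (-1 : ℂ) ^ j * (k.choose j : ℂ) * (a1 * ((k : ℂ) - j) + b1) ^ p1 *
        (a2 * ((k : ℂ) - j) + b2) ^ p2
      = (k.factorial : ℂ) * f.coeff k := by
    rw [← Stmt3Aux.key k f hfd]
    refine Finset.sum_congr rfl fun j _ => ?_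
    rw [heval j]
    ring
  rw [gsn, hsum, hcoeff]
  rw [one_div, inv_mul_cancel_left₀]
  exact_mod_cast Nat.factorial_ne_zero k
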